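/- arXiv:0902.3143 — 3 statements merged into one kernel-verified Lean document; each statement's English description precedes it below -/
import Mathlib

section
/- Let Ω₀ = {(x,y) ∈ ℝ² : x > 0, y > 0} be the positive quadrant viewed as a properly convex open subset of ℙ²(ℝ). Every 'pic' of Ω₀ whose vertex at infinity is the origin — i.e. every open triangle contained in Ω₀ having exactly one vertex at (0,0) ∈ ∂Ω₀ — has infinite Busemann volume μ_{Ω₀}. -/
open MeasureTheory

noncomputable section

/-- Parameter of the intersection point `p⁺` of the half-line from `x` in direction `v`
with `∂Ω`. -/
def tPlus (Ω : Set (EuclideanSpace ℝ (Fin 2))) (x v : EuclideanSpace ℝ (Fin 2)) : ℝ :=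
  sSup {t : ℝ | x + t • v ∈ Ω}

/-- Parameter of the intersection point `p⁻` of the half-line from `x` in direction `-v`
with `∂Ω`. -/
def tMinus (Ω : Set (EuclideanSpace ℝ (Fin 2))) (x v : EuclideanSpace ℝ (Fin 2)) : ℝ :=
  sInf {t : ℝ | x + t • v ∈ Ω}

/-- The Hilbert–Finsler norm `‖v‖ₓ = (1/‖x - p⁻‖ + 1/‖x - p⁺‖)·‖v‖`. -/
def finslerNorm (Ω : Set (EuclideanSpace ℝ (Fin 2))) (x v : EuclideanSpace ℝ (Fin 2)) : ℝ :=
  (1 / ‖x - (x + tMinus Ω x v • v)‖ + 1 / ‖x - (x + tPlus Ω x v • v)‖) * ‖v‖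

/-- The unit ball `B_x(1)` of the Hilbert–Finsler norm at `x`. -/
def finslerBall (Ω : Set (EuclideanSpace ℝ (Fin 2))) (x : EuclideanSpace ℝ (Fin 2)) :
    Set (EuclideanSpace ℝ (Fin 2)) :=
  {v | finslerNorm Ω x v < 1}

/-- The Lebesgue measure normalized so that the Euclidean unit ball has volume `1`. -/
def nVol (s : Set (EuclideanSpace ℝ (Fin 2))) : ENNReal :=
  volume s / volume {v : EuclideanSpace ℝ (Fin 2) | ‖v‖ < 1}

/-- The Busemann measure of `A ⊆ Ω`:  `μ_Ω(A) = ∫_A dVol(x) / Vol(B_x(1))`, where `Vol`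
is the normalized Lebesgue measure. -/
def busemann (Ω A : Set (EuclideanSpace ℝ (Fin 2))) : ENNReal :=
  ∫⁻ x in A, (nVol (finslerBall Ω x))⁻¹
    ∂((volume {v : EuclideanSpace ℝ (Fin 2) | ‖v‖ < 1})⁻¹ • volume)

end

open Metric

noncomputable section

lemma coord_le_norm (v : EuclideanSpace ℝ (Fin 2)) (i : Fin 2) : |v i| ≤ ‖v‖ := by
  rw [EuclideanSpace.norm_eq, Fin.sum_univ_two]
  rw [show |v i| = Real.sqrt (|v i| ^ 2) from (Real.sqrt_sq (abs_nonneg _)).symm]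
  apply Real.sqrt_le_sqrt
  fin_cases i <;> simp [Real.norm_eq_abs, sq_abs] <;> nlinarith [sq_nonneg (v 0), sq_nonneg (v 1)]

lemma quadrant_open : IsOpen {p : EuclideanSpace ℝ (Fin 2) | 0 < p 0 ∧ 0 < p 1} := by
  have h : {p : EuclideanSpace ℝ (Fin 2) | 0 < p 0 ∧ 0 < p 1}
      = (EuclideanSpace.proj (0 : Fin 2)) ⁻¹' (Set.Ioi 0) ∩
        (EuclideanSpace.proj (1 : Fin 2)) ⁻¹' (Set.Ioi 0) := rfl
  rw [h]
  exact (isOpen_Ioi.preimage (EuclideanSpace.proj (0:Fin 2)).continuous).inter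
    (isOpen_Ioi.preimage (EuclideanSpace.proj (1:Fin 2)).continuous)

lemma one_le_finslerNorm {x v : EuclideanSpace ℝ (Fin 2)}
    (hx0 : 0 < x 0) (hx1 : 0 < x 1) {i : Fin 2} (hvi : x i ≤ |v i|) :
    1 ≤ finslerNorm {p | 0 < p 0 ∧ 0 < p 1} x v := by
  set Ω : Set (EuclideanSpace ℝ (Fin 2)) := {p | 0 < p 0 ∧ 0 < p 1} with hΩ
  set S : Set ℝ := {t | x + t • v ∈ Ω} with hS
  have hxi : 0 < x i := by fin_cases i <;> assumption
  have hmem : ∀ t : ℝ, t ∈ S ↔ (0 < x 0 + t * v 0 ∧ 0 < x 1 + t * v 1) := by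
    intro t
    have h0 : (x + t • v) 0 = x 0 + t * v 0 := by simp
    have h1 : (x + t • v) 1 = x 1 + t * v 1 := by simp
    simp only [hS, hΩ, Set.mem_setOf_eq, h0, h1]
  have h0S : (0 : ℝ) ∈ S := by rw [hmem]; constructor <;> simpa
  have hSopen : IsOpen S := by
    have hcont : Continuous fun t : ℝ => x + t • v :=
      continuous_const.add (continuous_id.smul continuous_const)
    exact quadrant_open.preimage hcont
  obtain ⟨ε, hε, hball⟩ := Metric.isOpen_iff.1 hSopen 0 h0S
  have hmb : -(ε / 2) ∈ S ∧ ε / 2 ∈ S := by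
    constructor <;> apply hball <;>
      · rw [Metric.mem_ball, dist_zero_right, Real.norm_eq_abs, abs_lt]
        constructor <;> linarith
  have hvn : 0 < ‖v‖ := by
    have hvine : v i ≠ 0 := by
      intro h; rw [h] at hvi; simp at hvi; linarith
    refine norm_pos_iff.2 fun h => hvine ?_
    rw [h]; rfl
  have hkey : ∀ t : ℝ, t ∈ S → 0 < x i + t * v i := by
    intro t ht
    rw [hmem] at ht
    fin_cases i
    exacts [ht.1, ht.2]
  have hnormsub : ∀ t : ℝ, ‖x - (x + t • v)‖ = |t| * ‖v‖ := by
    intro t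
    rw [sub_add_cancel_left, norm_neg, norm_smul, Real.norm_eq_abs]
  rcases lt_trichotomy (v i) 0 with hv | hv | hv
  · -- v i < 0 : use tPlus
    have hva : x i ≤ -v i := by rwa [abs_of_neg hv] at hvi
    have hub : ∀ t ∈ S, t ≤ x i / (-v i) := by
      intro t ht
      have := hkey t ht
      rw [le_div_iff₀ (by linarith)]
      nlinarith
    have hbdd : BddAbove S := ⟨x i / (-v i), hub⟩
    have h1 : tPlus Ω x v ≤ x i / (-v i) := csSup_le ⟨0, h0S⟩ hub
    have h2 : ε / 2 ≤ tPlus Ω x v := le_csSup hbdd hmb.2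
    have htp : 0 < tPlus Ω x v := lt_of_lt_of_le (by linarith) h2
    have hle1 : tPlus Ω x v ≤ 1 := h1.trans (by rw [div_le_one (by linarith)]; linarith)
    rw [finslerNorm, hnormsub, hnormsub]
    have hB : 0 ≤ 1 / (|tMinus Ω x v| * ‖v‖) := by positivity
    have heq : 1 / (|tPlus Ω x v| * ‖v‖) * ‖v‖ = 1 / tPlus Ω x v := by
      rw [abs_of_pos htp]; field_simp
    calc (1 : ℝ) ≤ 1 / tPlus Ω x v := by rw [le_div_iff₀ htp]; linarith
      _ = 1 / (|tPlus Ω x v| * ‖v‖) * ‖v‖ := heq.symm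
      _ ≤ (1 / (|tMinus Ω x v| * ‖v‖) + 1 / (|tPlus Ω x v| * ‖v‖)) * ‖v‖ := by nlinarith
  · exfalso; rw [hv] at hvi; simp at hvi; linarith
  · -- 0 < v i : use tMinus
    have hva : x i ≤ v i := by rwa [abs_of_pos hv] at hvi
    have hlb : ∀ t ∈ S, -(x i / v i) ≤ t := by
      intro t ht
      have := hkey t ht
      rw [neg_le, le_div_iff₀ hv]
      nlinarith
    have hbdd : BddBelow S := ⟨-(x i / v i), hlb⟩
    have h1 : -(x i / v i) ≤ tMinus Ω x v := le_csInf ⟨0, h0S⟩ hlb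
    have h2 : tMinus Ω x v ≤ -(ε / 2) := csInf_le hbdd hmb.1
    have htm : tMinus Ω x v < 0 := lt_of_le_of_lt h2 (by linarith)
    have hle1 : -tMinus Ω x v ≤ 1 := by
      have : x i / v i ≤ 1 := by rw [div_le_one hv]; linarith
      linarith [neg_le.1 h1]
    rw [finslerNorm, hnormsub, hnormsub]
    have hB : 0 ≤ 1 / (|tPlus Ω x v| * ‖v‖) := by positivity
    have heq : 1 / (|tMinus Ω x v| * ‖v‖) * ‖v‖ = 1 / (-tMinus Ω x v) := by
      rw [abs_of_neg htm]; field_simp [htm.ne, hvn.ne']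
    have htm2 : 0 < -tMinus Ω x v := by linarith
    calc (1 : ℝ) ≤ 1 / (-tMinus Ω x v) := by rw [le_div_iff₀ htm2]; linarith
      _ = 1 / (|tMinus Ω x v| * ‖v‖) * ‖v‖ := heq.symm
      _ ≤ (1 / (|tMinus Ω x v| * ‖v‖) + 1 / (|tPlus Ω x v| * ‖v‖)) * ‖v‖ := by nlinarith
end

noncomputable section
lemma finslerBall_subset {x : EuclideanSpace ℝ (Fin 2)} (hx0 : 0 < x 0) (hx1 : 0 < x 1) :
    finslerBall {p | 0 < p 0 ∧ 0 < p 1} x ⊆ Metric.ball 0 (x 0 + x 1) := by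
  intro v hv
  have hv' : finslerNorm {p | 0 < p 0 ∧ 0 < p 1} x v < 1 := hv
  have h0 : |v 0| < x 0 := by
    by_contra h; push_neg at h
    exact absurd hv' (not_lt.2 (one_le_finslerNorm hx0 hx1 h))
  have h1 : |v 1| < x 1 := by
    by_contra h; push_neg at h
    exact absurd hv' (not_lt.2 (one_le_finslerNorm hx0 hx1 h))
  rw [mem_ball_zero_iff]
  have hn : ‖v‖ ≤ |v 0| + |v 1| := by
    rw [EuclideanSpace.norm_eq, Fin.sum_univ_two, Real.norm_eq_abs, Real.norm_eq_abs]
    calc Real.sqrt (|v 0| ^ 2 + |v 1| ^ 2) ≤ Real.sqrt ((|v 0| + |v 1|) ^ 2) :=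
          Real.sqrt_le_sqrt (by nlinarith [abs_nonneg (v 0), abs_nonneg (v 1)])
      _ = |v 0| + |v 1| := Real.sqrt_sq (by positivity)
  linarith

lemma integrand_ge {x : EuclideanSpace ℝ (Fin 2)} (hx0 : 0 < x 0) (hx1 : 0 < x 1)
    {R : ℝ} (hR : x 0 + x 1 ≤ R) :
    (ENNReal.ofReal (R ^ 2))⁻¹ ≤ (nVol (finslerBall {p | 0 < p 0 ∧ 0 < p 1} x))⁻¹ := by
  apply ENNReal.inv_le_inv.2
  rw [nVol]
  set c := volume {v : EuclideanSpace ℝ (Fin 2) | ‖v‖ < 1} with hcdef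
  have hcb : c = volume (Metric.ball (0 : EuclideanSpace ℝ (Fin 2)) 1) := by
    rw [hcdef, ball_zero_eq]
  have hc0 : c ≠ 0 := by rw [hcb]; exact (measure_ball_pos _ _ one_pos).ne'
  have hctop : c ≠ ⊤ := by rw [hcb]; exact measure_ball_lt_top.ne
  rw [ENNReal.div_le_iff hc0 hctop]
  calc volume (finslerBall {p | 0 < p 0 ∧ 0 < p 1} x)
      ≤ volume (Metric.ball (0 : EuclideanSpace ℝ (Fin 2)) R) :=
        measure_mono ((finslerBall_subset hx0 hx1).trans (Metric.ball_subset_ball hR))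
    _ = ENNReal.ofReal (R ^ 2) * c := by
        rw [Measure.addHaar_ball volume _ (by linarith : (0:ℝ) ≤ R), finrank_euclideanSpace_fin,
          ← hcb]
end

/-- Let `Ω₀ = {(x,y) : x > 0, y > 0}` be the positive quadrant, a properly convex open
subset of `ℙ²(ℝ)`.  Every pic of `Ω₀` whose vertex at infinity is the origin — every open
triangle contained in `Ω₀` with exactly one vertex at `(0,0) ∈ ∂Ω₀`, the other two
vertices `a, b` lying in `Ω₀` — has infinite Busemann volume. -/
theorem quadrant_pic_infinite_volume
    (Ω₀ : Set (EuclideanSpace ℝ (Fin 2))) (hΩ₀ : Ω₀ = {p | 0 < p 0 ∧ 0 < p 1})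
    (a b : EuclideanSpace ℝ (Fin 2)) (ha : a ∈ Ω₀) (hb : b ∈ Ω₀)
    (hnc : ¬ Collinear ℝ ({0, a, b} : Set (EuclideanSpace ℝ (Fin 2)))) :
    busemann Ω₀ (interior (convexHull ℝ ({0, a, b} : Set (EuclideanSpace ℝ (Fin 2))))) = ⊤ := by
  subst hΩ₀
  -- the affine span is everything
  have hspan : affineSpan ℝ ({0, a, b} : Set (EuclideanSpace ℝ (Fin 2))) = ⊤ := by
    rw [AffineSubspace.affineSpan_eq_top_iff_vectorSpan_eq_top_of_nonempty ℝ _ _ ⟨0, by simp⟩]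
    have h1 : ¬ Module.finrank ℝ (vectorSpan ℝ ({0, a, b} : Set (EuclideanSpace ℝ (Fin 2)))) ≤ 1 :=
      fun h => hnc (collinear_iff_finrank_le_one.2 h)
    have h2 : Module.finrank ℝ (vectorSpan ℝ ({0, a, b} : Set (EuclideanSpace ℝ (Fin 2)))) = 2 := by
      have hle := Submodule.finrank_le (vectorSpan ℝ ({0, a, b} : Set (EuclideanSpace ℝ (Fin 2))))
      rw [finrank_euclideanSpace_fin] at hle
      omega
    exact Submodule.eq_top_of_finrank_eq (by rw [h2, finrank_euclideanSpace_fin])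
  obtain ⟨q, hq⟩ := interior_convexHull_nonempty_iff_affineSpan_eq_top.2 hspan
  obtain ⟨r0, hr0pos, hr0⟩ := Metric.isOpen_iff.1 isOpen_interior q hq
  -- the hull is inside the closed quadrant
  have hhull : convexHull ℝ ({0, a, b} : Set (EuclideanSpace ℝ (Fin 2)))
      ⊆ {p : EuclideanSpace ℝ (Fin 2) | 0 ≤ p 0 ∧ 0 ≤ p 1} := by
    apply convexHull_min
    · intro p hp
      simp only [Set.mem_insert_iff, Set.mem_singleton_iff] at hp
      rcases hp with rfl | rfl | rfl
      · constructor <;> simp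
      · exact ⟨ha.1.le, ha.2.le⟩
      · exact ⟨hb.1.le, hb.2.le⟩
    · intro p hp p' hp' α β hα hβ hab
      have e0 : (α • p + β • p') 0 = α * p 0 + β * p' 0 := by simp
      have e1 : (α • p + β • p') 1 = α * p 1 + β * p' 1 := by simp
      constructor
      · rw [e0]; exact add_nonneg (mul_nonneg hα hp.1) (mul_nonneg hβ hp'.1)
      · rw [e1]; exact add_nonneg (mul_nonneg hα hp.2) (mul_nonneg hβ hp'.2)
  -- the interior point has positive coordinates
  have hqpos : ∀ i : Fin 2, 0 < q i := by
    intro i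
    have hmemb : q - (r0 / 2) • EuclideanSpace.single i (1 : ℝ) ∈ Metric.ball q r0 := by
      rw [Metric.mem_ball, dist_eq_norm]
      have he : q - (r0 / 2) • EuclideanSpace.single i (1 : ℝ) - q
          = -((r0 / 2) • EuclideanSpace.single i (1 : ℝ)) := by abel
      rw [he, norm_neg, norm_smul, Real.norm_eq_abs, abs_of_pos (by linarith),
        EuclideanSpace.norm_single]
      simp; linarith
    have hQ := hhull (interior_subset (hr0 hmemb))
    have hco : (q - (r0 / 2) • EuclideanSpace.single i (1 : ℝ)) i = q i - r0 / 2 := by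
      simp [EuclideanSpace.single_apply]
    have hge : 0 ≤ q i - r0 / 2 := by
      rw [← hco]
      fin_cases i
      · exact hQ.1
      · exact hQ.2
    linarith
  set r : ℝ := min (r0 / 2) (min (q 0) (q 1) / 4) with hrdef
  have hrpos : 0 < r := by
    have h01 := lt_min (hqpos 0) (hqpos 1)
    exact lt_min (by linarith) (by linarith)
  have hrq0 : 4 * r ≤ q 0 := by
    have h1 : r ≤ min (q 0) (q 1) / 4 := min_le_right _ _
    linarith [min_le_left (q 0) (q 1)]
  have hrq1 : 4 * r ≤ q 1 := by
    have h1 : r ≤ min (q 0) (q 1) / 4 := min_le_right _ _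
    linarith [min_le_right (q 0) (q 1)]
  have hball_sub : Metric.ball q r ⊆ interior (convexHull ℝ ({0, a, b} : Set (EuclideanSpace ℝ (Fin 2)))) :=
    (Metric.ball_subset_ball (by linarith [min_le_left (r0 / 2) (min (q 0) (q 1) / 4)])).trans hr0
  -- the scaled balls
  set s : ℕ → ℝ := fun n => (1 / 2 : ℝ) ^ n with hsdef
  have hspos : ∀ n, 0 < s n := fun n => by positivity
  have hsle1 : ∀ n, s n ≤ 1 := fun n => pow_le_one₀ (by norm_num) (by norm_num)
  set D : ℕ → Set (EuclideanSpace ℝ (Fin 2)) := fun n => Metric.ball ((s n) • q) (s n * r) with hDdef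
  have hD_coord : ∀ n, ∀ z ∈ D n, ∀ i : Fin 2, s n * (q i - r) < z i ∧ z i < s n * (q i + r) := by
    intro n z hz i
    have h := coord_le_norm (z - s n • q) i
    have h2 : ‖z - s n • q‖ < s n * r := by rwa [Metric.mem_ball, dist_eq_norm] at hz
    have h3 : (z - s n • q) i = z i - s n * q i := by simp
    rw [h3] at h
    have h4 := abs_lt.1 (lt_of_le_of_lt h h2)
    constructor <;> nlinarith
  have hD_pos : ∀ n, ∀ z ∈ D n, (0 < z 0 ∧ 0 < z 1) ∧ z 0 + z 1 ≤ s n * (q 0 + q 1 + 2 * r) := by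
    intro n z hz
    have h0 := hD_coord n z hz 0
    have h1 := hD_coord n z hz 1
    have hq0 := hrq0; have hq1 := hrq1
    have hs := hspos n
    refine ⟨⟨?_, ?_⟩, ?_⟩ <;> nlinarith
  have hD_sub : ∀ n, D n ⊆ interior (convexHull ℝ ({0, a, b} : Set (EuclideanSpace ℝ (Fin 2)))) := by
    intro n z hz
    have h2 : ‖z - s n • q‖ < s n * r := by rwa [Metric.mem_ball, dist_eq_norm] at hz
    have hy : (s n)⁻¹ • z ∈ Metric.ball q r := by
      rw [Metric.mem_ball, dist_eq_norm]
      have he : (s n)⁻¹ • z - q = (s n)⁻¹ • (z - s n • q) := by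
        rw [smul_sub, inv_smul_smul₀ (hspos n).ne']
      rw [he, norm_smul, Real.norm_eq_abs, abs_of_pos (inv_pos.2 (hspos n))]
      calc (s n)⁻¹ * ‖z - s n • q‖ < (s n)⁻¹ * (s n * r) :=
            mul_lt_mul_of_pos_left h2 (inv_pos.2 (hspos n))
        _ = r := by rw [← mul_assoc, inv_mul_cancel₀ (hspos n).ne', one_mul]
    have hyT := hball_sub hy
    have h0cl : (0 : EuclideanSpace ℝ (Fin 2))
        ∈ closure (convexHull ℝ ({0, a, b} : Set (EuclideanSpace ℝ (Fin 2)))) :=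
      subset_closure (subset_convexHull _ _ (by simp))
    have hcombo : s n • ((s n)⁻¹ • z) + (1 - s n) • (0 : EuclideanSpace ℝ (Fin 2))
        ∈ interior (convexHull ℝ ({0, a, b} : Set (EuclideanSpace ℝ (Fin 2)))) :=
      (convex_convexHull ℝ _).combo_interior_closure_mem_interior hyT h0cl
        (hspos n) (by linarith [hsle1 n]) (by ring)
    simpa [smul_inv_smul₀ (hspos n).ne'] using hcombo
  -- disjointness of the scaled balls
  have hdisj : Pairwise (Function.onFun Disjoint D) := by
    have key : ∀ n m, n < m → Disjoint (D n) (D m) := by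
      intro n m hnm
      rw [Set.disjoint_left]
      intro z hzn hzm
      have h1 := (hD_coord n z hzn 0).1
      have h2 := (hD_coord m z hzm 0).2
      have h3 : s m ≤ s (n + 1) := pow_le_pow_of_le_one (by norm_num) (by norm_num) hnm
      have h4 : s (n + 1) = s n / 2 := by simp only [hsdef]; rw [pow_succ]; ring
      have hsn := hspos n
      have h5 : s (n + 1) * (q 0 + r) = s n / 2 * (q 0 + r) := by rw [h4]
      have h6 : s m * (q 0 + r) ≤ s (n + 1) * (q 0 + r) :=
        mul_le_mul_of_nonneg_right h3 (by linarith : (0:ℝ) ≤ q 0 + r)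
      have h7 : s n * (4 * r) ≤ s n * q 0 := mul_le_mul_of_nonneg_left hrq0 hsn.le
      nlinarith
    intro n m hne
    rcases hne.lt_or_gt with h | h
    · exact key n m h
    · exact (key m n h).symm
  rw [busemann]
  set cb := volume {v : EuclideanSpace ℝ (Fin 2) | ‖v‖ < 1} with hcbdef
  have hcb : cb = volume (Metric.ball (0 : EuclideanSpace ℝ (Fin 2)) 1) := by
    rw [hcbdef, ball_zero_eq]
  have hc0 : cb ≠ 0 := by rw [hcb]; exact (measure_ball_pos _ _ one_pos).ne'
  have hctop : cb ≠ ⊤ := by rw [hcb]; exact measure_ball_lt_top.ne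
  set μ : Measure (EuclideanSpace ℝ (Fin 2)) := cb⁻¹ • volume with hμdef
  set M : ℝ := q 0 + q 1 + 2 * r with hMdef
  have hMpos : 0 < M := by
    have := hqpos 0; have := hqpos 1
    rw [hMdef]; linarith
  have hμD : ∀ n, μ (D n) = ENNReal.ofReal ((s n * r) ^ 2) := by
    intro n
    rw [hμdef, Measure.smul_apply, smul_eq_mul]
    have hDn : D n = Metric.ball ((s n) • q) (s n * r) := by rw [hDdef]
    rw [hDn, Measure.addHaar_ball volume _ (by positivity : (0:ℝ) ≤ s n * r),
      finrank_euclideanSpace_fin, ← hcb, mul_comm (ENNReal.ofReal ((s n * r) ^ 2)) cb,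
      ← mul_assoc, ENNReal.inv_mul_cancel hc0 hctop, one_mul]
  have hK0 : ENNReal.ofReal (r ^ 2 / M ^ 2) ≠ 0 :=
    (ENNReal.ofReal_pos.2 (by positivity)).ne'
  have hterm : ∀ n, ENNReal.ofReal (r ^ 2 / M ^ 2)
      ≤ ∫⁻ x in D n, (nVol (finslerBall {p | 0 < p 0 ∧ 0 < p 1} x))⁻¹ ∂μ := by
    intro n
    have hsn := hspos n
    have hconst : ENNReal.ofReal (r ^ 2 / M ^ 2)
        = (ENNReal.ofReal ((s n * M) ^ 2))⁻¹ * μ (D n) := by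
      rw [hμD n, ← ENNReal.div_eq_inv_mul,
        ← ENNReal.ofReal_div_of_pos (by positivity : (0:ℝ) < (s n * M) ^ 2)]
      congr 1
      field_simp
    rw [hconst]
    calc (ENNReal.ofReal ((s n * M) ^ 2))⁻¹ * μ (D n)
        = ∫⁻ _ in D n, (ENNReal.ofReal ((s n * M) ^ 2))⁻¹ ∂μ := (setLIntegral_const _ _).symm
      _ ≤ ∫⁻ x in D n, (nVol (finslerBall {p | 0 < p 0 ∧ 0 < p 1} x))⁻¹ ∂μ := by
          apply setLIntegral_mono' (by rw [hDdef]; exact measurableSet_ball)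
          intro z hz
          exact integrand_ge (hD_pos n z hz).1.1 (hD_pos n z hz).1.2 (hD_pos n z hz).2
  have hUsub : (⋃ n, D n) ⊆ interior (convexHull ℝ ({0, a, b} : Set (EuclideanSpace ℝ (Fin 2)))) :=
    Set.iUnion_subset hD_sub
  have htop : (⊤ : ENNReal) ≤ ∫⁻ x in ⋃ n, D n,
      (nVol (finslerBall {p | 0 < p 0 ∧ 0 < p 1} x))⁻¹ ∂μ := by
    rw [lintegral_iUnion (fun n => by rw [hDdef]; exact measurableSet_ball) hdisj]
    calc (⊤ : ENNReal) = ∑' _ : ℕ, ENNReal.ofReal (r ^ 2 / M ^ 2) :=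
          (ENNReal.tsum_const_eq_top_of_ne_zero hK0).symm
      _ ≤ _ := ENNReal.tsum_le_tsum hterm
  exact top_le_iff.1 (htop.trans (lintegral_mono_set hUsub))
end

section
/- Let Ω₀ = {(x,y) ∈ ℝ² : x > 0, y > x·ln(x)} viewed as a properly convex open subset of ℙ²(ℝ). For every point (x,y) ∈ Ω₀, the Hilbert unit ball B_{(x,y)}(1) has Lebesgue area at most 4x(y − x·ln x), and consequently every pic P = {(x,y) : 0 < x < ε, ax < y < bx} with 0 < a < b has infinite Busemann volume: μ_{Ω₀}(P) = ∫_P dA/Vol(B(1)) ≥ ∫₀^ε (1/(4x))·ln((b − ln x)/(a − ln x)) dx = +∞. -/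
open MeasureTheory

open Set Filter


lemma aux_tangent {x X : ℝ} (hx : 0 < x) (hX : 0 < X) :
    X * (Real.log x + 1) - x ≤ X * Real.log X := by
  have h := Real.log_le_sub_one_of_pos (div_pos hx hX)
  rw [Real.log_div hx.ne' hX.ne'] at h
  have h2 := mul_le_mul_of_nonneg_left h hX.le
  rw [mul_sub] at h2
  have : X * (x / X) = x := by field_simp
  nlinarith

lemma omega_convex : Convex ℝ {p : EuclideanSpace ℝ (Fin 2) | 0 < p 0 ∧ p 0 * Real.log (p 0) < p 1} := by
  intro p hp q hq α β hα hβ hs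
  have key := Real.convexOn_mul_log.2 (le_of_lt hp.1) (le_of_lt hq.1) hα hβ hs
  simp only [Set.mem_setOf_eq, PiLp.add_apply, PiLp.smul_apply, smul_eq_mul] at *
  rcases hα.eq_or_lt with rfl | hα'
  · simp only [zero_mul, zero_add] at hs ⊢
    subst hs; simpa using hq
  rcases hβ.eq_or_lt with rfl | hβ'
  · simp only [add_zero, zero_mul] at hs ⊢
    subst hs; simpa using hp
  constructor
  · have := mul_pos hα' hp.1
    have := mul_pos hβ' hq.1
    linarith
  · calc (α * p 0 + β * q 0) * Real.log (α * p 0 + β * q 0)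
        ≤ α * (p 0 * Real.log (p 0)) + β * (q 0 * Real.log (q 0)) := by
          simpa [smul_eq_mul] using key
    _ < α * p 1 + β * q 1 := by
          have := mul_lt_mul_of_pos_left hp.2 hα'
          have := mul_lt_mul_of_pos_left hq.2 hβ'
          linarith

lemma omega_open : IsOpen {p : EuclideanSpace ℝ (Fin 2) | 0 < p 0 ∧ p 0 * Real.log (p 0) < p 1} := by
  have hc0 : Continuous fun p : EuclideanSpace ℝ (Fin 2) => p 0 :=
    (EuclideanSpace.proj (0 : Fin 2)).continuous
  have hc1 : Continuous fun p : EuclideanSpace ℝ (Fin 2) => p 1 :=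
    (EuclideanSpace.proj (1 : Fin 2)).continuous
  have hO : IsOpen {p : EuclideanSpace ℝ (Fin 2) | 0 < p 0} := isOpen_lt continuous_const hc0
  have hcont : ContinuousOn (fun p : EuclideanSpace ℝ (Fin 2) => p 0 * Real.log (p 0) - p 1)
      {p | 0 < p 0} := by
    apply ContinuousOn.sub _ hc1.continuousOn
    exact hc0.continuousOn.mul (Real.continuousOn_log.comp hc0.continuousOn
      (fun p hp => ne_of_gt hp))
  have := hcont.isOpen_inter_preimage hO (isOpen_Iio (a := (0:ℝ)))
  convert this using 1
  ext p
  simp only [Set.mem_setOf_eq, Set.mem_inter_iff, Set.mem_preimage, Set.mem_Iio]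
  constructor
  · rintro ⟨h1, h2⟩; exact ⟨h1, by linarith⟩
  · rintro ⟨h1, h2⟩; exact ⟨h1, by linarith⟩


lemma mem_pm {Ω : Set (EuclideanSpace ℝ (Fin 2))} (hconv : Convex ℝ Ω) (hopen : IsOpen Ω)
    {p v : EuclideanSpace ℝ (Fin 2)} (hp : p ∈ Ω) (hv : finslerNorm Ω p v < 1) :
    p + v ∈ Ω ∧ p - v ∈ Ω := by
  rcases eq_or_ne v 0 with rfl | hv0
  · exact ⟨by simpa using hp, by simpa using hp⟩
  set T := {t : ℝ | p + t • v ∈ Ω} with hT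
  have hT0 : (0:ℝ) ∈ T := by simpa [hT] using hp
  have hTne : T.Nonempty := ⟨0, hT0⟩
  have hTconv : Convex ℝ T := by
    intro s hs t ht α β hα hβ hαβ
    have heq : p + (α * s + β * t) • v = α • (p + s • v) + β • (p + t • v) := by
      rw [smul_add, smul_add, ← add_assoc, add_assoc (α • p)]
      rw [add_comm (α • s • v), ← add_assoc, ← add_smul, hαβ, one_smul, add_assoc]
      rw [← smul_assoc, ← smul_assoc, ← add_smul]
      norm_num
    show p + (α • s + β • t) • v ∈ Ω
    simp only [smul_eq_mul]
    rw [heq]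
    exact hconv hs ht hα hβ hαβ
  have hTopen : IsOpen T := by
    have : Continuous fun t : ℝ => p + t • v :=
      continuous_const.add (continuous_id.smul continuous_const)
    exact hopen.preimage this
  obtain ⟨δ, hδ, hball⟩ := Metric.isOpen_iff.1 hTopen 0 hT0
  have hmemδ : δ/2 ∈ T := hball (by rw [Metric.mem_ball, Real.dist_eq, sub_zero, abs_of_pos (by linarith)]; linarith)
  have hmemδ' : -(δ/2) ∈ T := hball (by rw [Metric.mem_ball, Real.dist_eq, sub_zero, abs_of_neg (by linarith)]; linarith)
  have hvpos : (0:ℝ) < ‖v‖ := norm_pos_iff.mpr hv0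
  have hnormeq : ∀ t : ℝ, ‖p - (p + t • v)‖ = |t| * ‖v‖ := by
    intro t; rw [sub_add_cancel_left, norm_neg, norm_smul, Real.norm_eq_abs]
  have hNnn : 0 ≤ 1/‖p - (p + tMinus Ω p v • v)‖ := by positivity
  have hNnn' : 0 ≤ 1/‖p - (p + tPlus Ω p v • v)‖ := by positivity
  have key1 : ∃ t ∈ T, 1 < t := by
    by_cases hbdd : BddAbove T
    · have hsup : δ/2 ≤ sSup T := le_csSup hbdd hmemδ
      have hsup0 : 0 < sSup T := lt_of_lt_of_le (by linarith) hsup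
      have htp : tPlus Ω p v = sSup T := rfl
      have hB : (1:ℝ)/‖p - (p + tPlus Ω p v • v)‖ * ‖v‖ = 1 / sSup T := by
        rw [hnormeq, htp, abs_of_pos hsup0]
        field_simp
      have hle : 1 / sSup T ≤ finslerNorm Ω p v := by
        rw [← hB]; unfold finslerNorm
        nlinarith [hNnn, hvpos.le]
      have : 1 < sSup T := (div_lt_one hsup0).1 (lt_of_le_of_lt hle hv)
      exact exists_lt_of_lt_csSup hTne this
    · obtain ⟨t, ht, h1t⟩ := not_bddAbove_iff.1 hbdd 1
      exact ⟨t, ht, h1t⟩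
  have key2 : ∃ t ∈ T, t < -1 := by
    by_cases hbdd : BddBelow T
    · have hinf : sInf T ≤ -(δ/2) := csInf_le hbdd hmemδ'
      have hinf0 : sInf T < 0 := lt_of_le_of_lt hinf (by linarith)
      have htm : tMinus Ω p v = sInf T := rfl
      have hB : (1:ℝ)/‖p - (p + tMinus Ω p v • v)‖ * ‖v‖ = 1 / (-sInf T) := by
        rw [hnormeq, htm, abs_of_neg hinf0]
        have h1 : sInf T ≠ 0 := hinf0.ne
        field_simp
      have hle : 1 / (-sInf T) ≤ finslerNorm Ω p v := by
        rw [← hB]; unfold finslerNorm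
        nlinarith [hNnn', hvpos.le]
      have h1 : 1 < -sInf T := (div_lt_one (by linarith)).1 (lt_of_le_of_lt hle hv)
      exact exists_lt_of_csInf_lt hTne (by linarith)
    · obtain ⟨t, ht, h1t⟩ := not_bddBelow_iff.1 hbdd (-1)
      exact ⟨t, ht, h1t⟩
  constructor
  · obtain ⟨t, ht, h1t⟩ := key1
    have : (1:ℝ) ∈ T := by
      have := hTconv.segment_subset hT0 ht
      rw [segment_eq_Icc (by linarith : (0:ℝ) ≤ t)] at this
      exact this ⟨by linarith, by linarith⟩
    have h2 : p + (1:ℝ) • v ∈ Ω := this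
    rwa [one_smul] at h2
  · obtain ⟨t, ht, h1t⟩ := key2
    have : (-1:ℝ) ∈ T := by
      have := hTconv.segment_subset ht hT0
      rw [segment_eq_Icc (by linarith : t ≤ 0)] at this
      exact this ⟨by linarith, by linarith⟩
    have h2 : p + (-1:ℝ) • v ∈ Ω := this
    rw [neg_one_smul] at h2
    rwa [sub_eq_add_neg]


noncomputable def eqv : EuclideanSpace ℝ (Fin 2) ≃ᵐ ℝ × ℝ :=
  (MeasurableEquiv.toLp 2 (Fin 2 → ℝ)).symm.trans (MeasurableEquiv.finTwoArrow)

lemma eqv_mp : MeasurePreserving eqv volume volume :=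
  (EuclideanSpace.volume_preserving_symm_measurableEquiv_toLp (Fin 2)).trans
    (volume_preserving_finTwoArrow ℝ)

lemma eqv_apply (p : EuclideanSpace ℝ (Fin 2)) : eqv p = (p 0, p 1) := rfl

lemma vol_para (x c d : ℝ) :
    volume {v : EuclideanSpace ℝ (Fin 2) | |v 0| < x ∧ |v 1 - c * v 0| < d} =
      ENNReal.ofReal (2*d) * ENNReal.ofReal (2*x) := by
  set S : Set (ℝ × ℝ) := {q | |q.1| < x ∧ |q.2 - c*q.1| < d} with hS
  have hmeas : MeasurableSet S := by
    apply MeasurableSet.inter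
    · exact measurableSet_lt (measurable_fst.abs) measurable_const
    · exact measurableSet_lt ((measurable_snd.sub (measurable_fst.const_mul c)).abs)
        measurable_const
  have hpre : {v : EuclideanSpace ℝ (Fin 2) | |v 0| < x ∧ |v 1 - c * v 0| < d} = eqv ⁻¹' S := rfl
  rw [hpre, eqv_mp.measure_preimage hmeas.nullMeasurableSet]
  rw [Measure.volume_eq_prod]
  rw [Measure.prod_apply hmeas]
  have hcongr : ∀ s : ℝ, volume (Prod.mk s ⁻¹' S) =
      (Ioo (-x) x).indicator (fun _ => ENNReal.ofReal (2*d)) s := by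
    intro s
    by_cases h : |s| < x
    · have : Prod.mk s ⁻¹' S = Ioo (c*s - d) (c*s + d) := by
        ext t
        simp only [hS, mem_preimage, mem_setOf_eq, mem_Ioo]
        constructor
        · rintro ⟨h1, h2⟩
          rw [abs_lt] at h2
          exact ⟨by linarith [h2.1], by linarith [h2.2]⟩
        · rintro ⟨h1, h2⟩
          exact ⟨h, by rw [abs_lt]; exact ⟨by linarith, by linarith⟩⟩
      rw [this, Real.volume_Ioo,
        Set.indicator_of_mem (show s ∈ Ioo (-x) x from mem_Ioo.2 (abs_lt.1 h))]
      ring_nf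
    · have : Prod.mk s ⁻¹' S = ∅ := by
        ext t; simp [hS, h]
      rw [this, measure_empty, indicator_of_notMem]
      rw [mem_Ioo, ← abs_lt]; exact h
  rw [lintegral_congr hcongr, lintegral_indicator measurableSet_Ioo]
  rw [setLIntegral_const, Real.volume_Ioo]
  congr 1
  ring_nf


lemma diverge {C K ε : ℝ} (hC : 0 < C) (hK : 0 < K) (hε : 0 < ε) (hε1 : ε ≤ 1) :
    ∫⁻ t in Set.Ioo (0:ℝ) ε, ENNReal.ofReal (C / (t * (K - Real.log t))) = ⊤ := by
  set g : ℝ → ℝ := fun t => C / (t * (K - Real.log t)) with hg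
  set G : ℝ → ℝ := fun t => -C * Real.log (K - Real.log t) with hG
  set I := ∫⁻ t in Set.Ioo (0:ℝ) ε, ENNReal.ofReal (g t) with hI
  have hden : ∀ t : ℝ, 0 < t → t ≤ 1 → 0 < K - Real.log t := by
    intro t ht ht1
    have : Real.log t ≤ 0 := Real.log_nonpos ht.le ht1
    linarith
  have key : ∀ δ : ℝ, δ ∈ Set.Ioo 0 ε → ENNReal.ofReal (G ε - G δ) ≤ I := by
    intro δ hδ
    obtain ⟨hδ0, hδε⟩ := hδ
    have hcont : ContinuousOn g (Icc δ ε) := by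
      apply continuousOn_const.div
      · apply ContinuousOn.mul continuousOn_id
        exact continuousOn_const.sub (Real.continuousOn_log.mono (by
          intro t ht; exact ne_of_gt (lt_of_lt_of_le hδ0 ht.1)))
      · intro t ht
        have ht0 : 0 < t := lt_of_lt_of_le hδ0 ht.1
        exact (mul_pos ht0 (hden t ht0 (le_trans ht.2 hε1))).ne'
    have hderiv : ∀ t ∈ Set.uIcc δ ε, HasDerivAt G (g t) t := by
      intro t ht
      rw [Set.uIcc_of_le hδε.le] at ht
      have ht0 : 0 < t := lt_of_lt_of_le hδ0 ht.1
      have hKt : 0 < K - Real.log t := hden t ht0 (le_trans ht.2 hε1)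
      have h1 : HasDerivAt Real.log t⁻¹ t := Real.hasDerivAt_log ht0.ne'
      have h2 : HasDerivAt (fun s => K - Real.log s) (-t⁻¹) t := by
        have := (hasDerivAt_const t K).sub h1
        rw [zero_sub] at this
        exact this
      have h3 : HasDerivAt (fun s => Real.log (K - Real.log s))
          ((K - Real.log t)⁻¹ * -t⁻¹) t := by
        have := (Real.hasDerivAt_log hKt.ne').comp t h2
        exact this
      have h4 := h3.const_mul (-C)
      have h5 : g t = -C * ((K - Real.log t)⁻¹ * -t⁻¹) := by
        show C / (t * (K - Real.log t)) = -C * ((K - Real.log t)⁻¹ * -t⁻¹)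
        rw [div_eq_mul_inv, mul_inv]
        ring
      rw [h5]; exact h4
    have hiint : IntervalIntegrable g volume δ ε := by
      apply ContinuousOn.intervalIntegrable
      rwa [Set.uIcc_of_le hδε.le]
    have hftc := intervalIntegral.integral_eq_sub_of_hasDerivAt hderiv hiint
    have hnn : 0 ≤ᵐ[volume.restrict (Set.Ioo δ ε)] g := by
      refine (ae_restrict_iff' measurableSet_Ioo).2 (Eventually.of_forall ?_)
      intro t ht
      have ht0 : 0 < t := lt_trans hδ0 ht.1
      exact (div_pos hC (mul_pos ht0 (hden t ht0 (le_trans ht.2.le hε1)))).le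
    have hint : IntegrableOn g (Set.Ioo δ ε) :=
      (hcont.integrableOn_compact isCompact_Icc).mono_set Set.Ioo_subset_Icc_self
    calc ENNReal.ofReal (G ε - G δ) = ENNReal.ofReal (∫ t in Set.Ioo δ ε, g t) := by
          rw [← integral_Ioc_eq_integral_Ioo, ← intervalIntegral.integral_of_le hδε.le, hftc]
      _ = ∫⁻ t in Set.Ioo δ ε, ENNReal.ofReal (g t) :=
          ofReal_integral_eq_lintegral_ofReal hint hnn
      _ ≤ I := lintegral_mono_set (by intro t ht; exact ⟨lt_trans hδ0 ht.1, ht.2⟩)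
  have htend : Tendsto (fun δ => ENNReal.ofReal (G ε - G δ)) (nhdsWithin 0 (Set.Ioi 0)) (nhds ⊤) := by
    have h5 : Tendsto (fun δ : ℝ => K - Real.log δ) (nhdsWithin 0 (Set.Ioi 0)) atTop := by
      have := Real.tendsto_log_nhdsGT_zero
      have hneg : Tendsto (fun δ : ℝ => -Real.log δ) (nhdsWithin 0 (Set.Ioi 0)) atTop :=
        tendsto_neg_atBot_atTop.comp this
      simpa [sub_eq_add_neg] using tendsto_atTop_add_const_left _ K hneg
    have h6 : Tendsto (fun δ : ℝ => Real.log (K - Real.log δ)) (nhdsWithin 0 (Set.Ioi 0)) atTop :=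
      Real.tendsto_log_atTop.comp h5
    have h7 : Tendsto (fun δ : ℝ => G ε - G δ) (nhdsWithin 0 (Set.Ioi 0)) atTop := by
      have := tendsto_atTop_add_const_left _ (G ε) ((h6.const_mul_atTop hC))
      apply this.congr
      intro δ
      rw [hG]
      ring
    exact ENNReal.tendsto_ofReal_atTop.comp h7
  have hev : ∀ᶠ δ in nhdsWithin 0 (Set.Ioi 0), ENNReal.ofReal (G ε - G δ) ≤ I := by
    filter_upwards [Ioo_mem_nhdsGT_of_mem (Set.mem_Ico.2 ⟨le_refl 0, hε⟩)] with δ hδ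
    exact key δ hδ
  have := le_of_tendsto htend hev
  rw [top_le_iff] at this
  exact this

lemma unitBall_eq : {v : EuclideanSpace ℝ (Fin 2) | ‖v‖ < 1} = Metric.ball 0 1 := by
  ext v; simp [mem_ball_zero_iff]

lemma kappa_ne_zero : volume {v : EuclideanSpace ℝ (Fin 2) | ‖v‖ < 1} ≠ 0 := by
  rw [unitBall_eq]; exact (Metric.measure_ball_pos volume 0 one_pos).ne'

lemma kappa_ne_top : volume {v : EuclideanSpace ℝ (Fin 2) | ‖v‖ < 1} ≠ ⊤ := by
  rw [unitBall_eq]; exact measure_ball_lt_top.ne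

lemma busemann_eq (Ω A : Set (EuclideanSpace ℝ (Fin 2))) :
    busemann Ω A = ∫⁻ x in A, (volume (finslerBall Ω x))⁻¹ := by
  unfold busemann nVol
  set κ := volume {v : EuclideanSpace ℝ (Fin 2) | ‖v‖ < 1} with hκ
  rw [Measure.restrict_smul, lintegral_smul_measure]
  have hpt : ∀ x, (volume (finslerBall Ω x) / κ)⁻¹ = (volume (finslerBall Ω x))⁻¹ * κ := by
    intro x
    rw [div_eq_mul_inv, ENNReal.mul_inv (Or.inr (ENNReal.inv_ne_top.2 kappa_ne_zero))
      (Or.inr (ENNReal.inv_ne_zero.2 kappa_ne_top)), inv_inv]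
  simp_rw [hpt]
  rw [lintegral_mul_const' κ _ kappa_ne_top, mul_comm _ κ, smul_eq_mul, ← mul_assoc,
    ENNReal.inv_mul_cancel kappa_ne_zero kappa_ne_top, one_mul]

lemma lintegral_transfer (S : Set (ℝ×ℝ)) (hS : MeasurableSet S) (H : ℝ×ℝ → ENNReal)
    (hH : Measurable H) :
    ∫⁻ p in eqv ⁻¹' S, H (eqv p) = ∫⁻ q in S, H q := by
  rw [← lintegral_indicator (eqv.measurableSet_preimage.2 hS),
    ← lintegral_indicator hS]
  have heq : (fun p => (eqv ⁻¹' S).indicator (fun p => H (eqv p)) p)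
      = fun p => (S.indicator H) (eqv p) := rfl
  rw [heq]
  exact eqv_mp.lintegral_comp (hH.indicator hS)

lemma fubini_top {a b ε₁ : ℝ} (ha : 0 < a) (hab : a < b) (hε : 0 < ε₁) (hε1 : ε₁ ≤ 1) :
    ∫⁻ q in {q : ℝ×ℝ | 0 < q.1 ∧ q.1 < ε₁ ∧ a*q.1 < q.2 ∧ q.2 < b*q.1},
      ENNReal.ofReal (1 / (4 * q.1^2 * (b - Real.log q.1))) = ⊤ := by
  set g : ℝ → ENNReal := fun s => ENNReal.ofReal (1 / (4 * s^2 * (b - Real.log s))) with hg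
  have hgmeas : Measurable g := by
    apply Measurable.ennreal_ofReal
    apply Measurable.div measurable_const
    exact ((measurable_const.mul (measurable_id.pow_const 2)).mul
      (measurable_const.sub Real.measurable_log))
  set S : Set (ℝ×ℝ) := {q | 0 < q.1 ∧ q.1 < ε₁ ∧ a*q.1 < q.2 ∧ q.2 < b*q.1} with hS
  have hSmeas : MeasurableSet S :=
    (measurableSet_lt measurable_const measurable_fst).inter
      ((measurableSet_lt measurable_fst measurable_const).inter
        ((measurableSet_lt (measurable_fst.const_mul a) measurable_snd).inter
          (measurableSet_lt measurable_snd (measurable_fst.const_mul b))))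
  have step1 : ∫⁻ q in S, g q.1 = ∫⁻ s, ∫⁻ t, S.indicator (fun q => g q.1) (s, t) := by
    rw [← lintegral_indicator hSmeas, Measure.volume_eq_prod]
    exact lintegral_prod _ ((hgmeas.comp measurable_fst).indicator hSmeas).aemeasurable
  have step2 : ∀ s : ℝ, (∫⁻ t, S.indicator (fun q => g q.1) (s, t)) =
      (Ioo (0:ℝ) ε₁).indicator (fun s => g s * ENNReal.ofReal ((b-a)*s)) s := by
    intro s
    by_cases h : s ∈ Ioo (0:ℝ) ε₁
    · have hin : ∀ t : ℝ, S.indicator (fun q => g q.1) (s, t) =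
          (Ioo (a*s) (b*s)).indicator (fun _ => g s) t := by
        intro t
        by_cases ht : t ∈ Ioo (a*s) (b*s)
        · rw [indicator_of_mem ht,
            indicator_of_mem (show (s,t) ∈ S from ⟨h.1, h.2, ht.1, ht.2⟩)]
        · rw [indicator_of_notMem ht, indicator_of_notMem]
          intro hc
          exact ht ⟨hc.2.2.1, hc.2.2.2⟩
      simp_rw [hin]
      rw [lintegral_indicator measurableSet_Ioo, setLIntegral_const, Real.volume_Ioo,
        indicator_of_mem h]
      congr 2
      ring
    · have hin : ∀ t : ℝ, S.indicator (fun q => g q.1) (s, t) = 0 := by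
        intro t
        apply indicator_of_notMem
        intro hc
        exact h ⟨hc.1, hc.2.1⟩
      simp_rw [hin]
      rw [lintegral_zero, indicator_of_notMem h]
  have step3 : ∫⁻ s in Ioo (0:ℝ) ε₁, g s * ENNReal.ofReal ((b-a)*s) =
      ∫⁻ s in Ioo (0:ℝ) ε₁, ENNReal.ofReal (((b-a)/4) / (s * (b - Real.log s))) := by
    apply setLIntegral_congr_fun measurableSet_Ioo
    intro s hs
    rw [hg]
    beta_reduce
    have hs0 : (0:ℝ) < s := hs.1
    have hB : 0 < b - Real.log s := by
      have h1 : Real.log s ≤ 0 := Real.log_nonpos hs0.le (le_trans hs.2.le hε1)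
      linarith
    rw [← ENNReal.ofReal_mul (by positivity)]
    congr 1
    field_simp
  calc ∫⁻ q in S, ENNReal.ofReal (1 / (4 * q.1^2 * (b - Real.log q.1)))
      = ∫⁻ q in S, g q.1 := rfl
    _ = ∫⁻ s, (Ioo (0:ℝ) ε₁).indicator (fun s => g s * ENNReal.ofReal ((b-a)*s)) s := by
        rw [step1]; exact lintegral_congr step2
    _ = ∫⁻ s in Ioo (0:ℝ) ε₁, g s * ENNReal.ofReal ((b-a)*s) :=
        lintegral_indicator measurableSet_Ioo _
    _ = ∫⁻ s in Ioo (0:ℝ) ε₁, ENNReal.ofReal (((b-a)/4) / (s * (b - Real.log s))) := step3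
    _ = ⊤ := diverge (by linarith) (by linarith) hε hε1


lemma ball_subset {p : EuclideanSpace ℝ (Fin 2)}
    (hp : p ∈ {p : EuclideanSpace ℝ (Fin 2) | 0 < p 0 ∧ p 0 * Real.log (p 0) < p 1}) :
    finslerBall {p : EuclideanSpace ℝ (Fin 2) | 0 < p 0 ∧ p 0 * Real.log (p 0) < p 1} p ⊆
      {v | |v 0| < p 0 ∧ |v 1 - (Real.log (p 0) + 1) * v 0| < p 1 - p 0 * Real.log (p 0)} := by
  intro v hv
  obtain ⟨h1, h2⟩ := mem_pm omega_convex omega_open hp hv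
  rw [Set.mem_setOf_eq] at h1 h2
  simp only [PiLp.add_apply, PiLp.sub_apply] at h1 h2
  obtain ⟨h1a, h1b⟩ := h1
  obtain ⟨h2a, h2b⟩ := h2
  have t1 := aux_tangent hp.1 h1a
  have t2 := aux_tangent hp.1 h2a
  constructor
  · rw [abs_lt]; constructor <;> linarith
  · rw [abs_lt]
    have e1 : (p 0 + v 0) * (Real.log (p 0) + 1) - p 0
        = p 0 * Real.log (p 0) + (Real.log (p 0) + 1) * v 0 := by ring
    have e2 : (p 0 - v 0) * (Real.log (p 0) + 1) - p 0
        = p 0 * Real.log (p 0) - (Real.log (p 0) + 1) * v 0 := by ring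
    constructor <;> linarith

lemma vol_ball_le {p : EuclideanSpace ℝ (Fin 2)}
    (hp : p ∈ {p : EuclideanSpace ℝ (Fin 2) | 0 < p 0 ∧ p 0 * Real.log (p 0) < p 1}) :
    volume (finslerBall {p : EuclideanSpace ℝ (Fin 2) | 0 < p 0 ∧ p 0 * Real.log (p 0) < p 1} p)
      ≤ ENNReal.ofReal (4 * p 0 * (p 1 - p 0 * Real.log (p 0))) := by
  refine le_trans (measure_mono (ball_subset hp)) ?_
  rw [vol_para (p 0) (Real.log (p 0) + 1) (p 1 - p 0 * Real.log (p 0))]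
  have hd : (0:ℝ) ≤ 2 * (p 1 - p 0 * Real.log (p 0)) := by
    have := hp.2; linarith
  rw [← ENNReal.ofReal_mul hd]
  apply ENNReal.ofReal_le_ofReal
  apply le_of_eq
  ring

lemma part_i {ε a b : ℝ} (hε : 0 < ε) (ha : 0 < a) (hab : a < b) :
    (∫⁻ t in Set.Ioo (0 : ℝ) ε,
        ENNReal.ofReal (1 / (4 * t) * Real.log ((b - Real.log t) / (a - Real.log t)))) = ⊤ := by
  set ε₁ := min ε 1 with hε₁
  have hε₁0 : 0 < ε₁ := lt_min hε one_pos
  have hε₁1 : ε₁ ≤ 1 := min_le_right _ _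
  have hdiv := diverge (C := (b-a)/4) (K := b) (by linarith) (by linarith) hε₁0 hε₁1
  have hlow : (∫⁻ t in Set.Ioo (0:ℝ) ε₁, ENNReal.ofReal ((b-a)/4 / (t * (b - Real.log t))))
      ≤ ∫⁻ t in Set.Ioo (0:ℝ) ε₁,
        ENNReal.ofReal (1 / (4 * t) * Real.log ((b - Real.log t) / (a - Real.log t))) := by
    apply setLIntegral_mono' measurableSet_Ioo
    intro t ht
    have ht0 : 0 < t := ht.1
    have hlog : Real.log t < 0 := Real.log_neg ht0 (lt_of_lt_of_le ht.2 hε₁1)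
    have hA : 0 < a - Real.log t := by linarith
    have hB : 0 < b - Real.log t := by linarith
    apply ENNReal.ofReal_le_ofReal
    have hlogge : (b - a) / (b - Real.log t) ≤
        Real.log ((b - Real.log t) / (a - Real.log t)) := by
      have h := Real.log_le_sub_one_of_pos (div_pos hA hB)
      rw [Real.log_div hA.ne' hB.ne'] at h
      rw [Real.log_div hB.ne' hA.ne']
      have h3 : (b - a) / (b - Real.log t) = 1 - (a - Real.log t)/(b - Real.log t) := by
        rw [eq_sub_iff_add_eq, ← add_div, div_eq_one_iff_eq hB.ne']; ring
      rw [h3]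
      linarith
    have h4 : (b-a)/4 / (t * (b - Real.log t))
        = 1 / (4 * t) * ((b - a) / (b - Real.log t)) := by
      field_simp
    rw [h4]
    exact mul_le_mul_of_nonneg_left hlogge (by positivity)
  rw [eq_top_iff]
  calc (⊤:ENNReal) = ∫⁻ t in Set.Ioo (0:ℝ) ε₁,
        ENNReal.ofReal ((b-a)/4 / (t * (b - Real.log t))) := hdiv.symm
    _ ≤ ∫⁻ t in Set.Ioo (0:ℝ) ε₁,
        ENNReal.ofReal (1 / (4 * t) * Real.log ((b - Real.log t) / (a - Real.log t))) := hlow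
    _ ≤ _ := lintegral_mono_set (Ioo_subset_Ioo le_rfl (min_le_left _ _))

/-- Let `Ω₀ = {(x,y) : x > 0, y > x·ln x}`, a properly convex open subset of `ℙ²(ℝ)`.
For every `(x,y) ∈ Ω₀` the Hilbert–Finsler unit ball at `(x,y)` has Lebesgue area at most
`4x(y - x·ln x)`; consequently every pic `P = {(x,y) : 0 < x < ε, ax < y < bx}` with
`0 < a < b` has infinite Busemann volume:
`μ_{Ω₀}(P) ≥ ∫₀^ε (1/(4x))·ln((b - ln x)/(a - ln x)) dx = +∞`. -/
theorem log_domain_pic_infinite_volume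
    (Ω₀ : Set (EuclideanSpace ℝ (Fin 2)))
    (hΩ₀ : Ω₀ = {p | 0 < p 0 ∧ p 0 * Real.log (p 0) < p 1}) :
    (∀ p ∈ Ω₀, volume (finslerBall Ω₀ p) ≤
      ENNReal.ofReal (4 * p 0 * (p 1 - p 0 * Real.log (p 0)))) ∧
    (∀ ε a b : ℝ, 0 < ε → 0 < a → a < b →
      (∫⁻ t in Set.Ioo (0 : ℝ) ε,
          ENNReal.ofReal (1 / (4 * t) * Real.log ((b - Real.log t) / (a - Real.log t)))) = ⊤ ∧
      busemann Ω₀ {p | 0 < p 0 ∧ p 0 < ε ∧ a * p 0 < p 1 ∧ p 1 < b * p 0} ≥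
        ∫⁻ t in Set.Ioo (0 : ℝ) ε,
          ENNReal.ofReal (1 / (4 * t) * Real.log ((b - Real.log t) / (a - Real.log t))) ∧
      busemann Ω₀ {p | 0 < p 0 ∧ p 0 < ε ∧ a * p 0 < p 1 ∧ p 1 < b * p 0} = ⊤) := by
  subst hΩ₀
  constructor
  · intro p hp
    exact vol_ball_le hp
  · intro ε a b hε ha hab
    have hI := part_i hε ha hab
    set ε₁ := min ε 1 with hε₁
    have hε₁0 : 0 < ε₁ := lt_min hε one_pos
    have hε₁1 : ε₁ ≤ 1 := min_le_right _ _
    set S₁ : Set (ℝ×ℝ) := {q | 0 < q.1 ∧ q.1 < ε₁ ∧ a*q.1 < q.2 ∧ q.2 < b*q.1} with hS₁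
    have hS₁meas : MeasurableSet S₁ :=
      (measurableSet_lt measurable_const measurable_fst).inter
        ((measurableSet_lt measurable_fst measurable_const).inter
          ((measurableSet_lt (measurable_fst.const_mul a) measurable_snd).inter
            (measurableSet_lt measurable_snd (measurable_fst.const_mul b))))
    set H : ℝ×ℝ → ENNReal := fun q => ENNReal.ofReal (1 / (4 * q.1^2 * (b - Real.log q.1)))
      with hH
    have hHmeas : Measurable H := by
      apply Measurable.ennreal_ofReal
      apply Measurable.div measurable_const
      exact ((measurable_const.mul (measurable_fst.pow_const 2)).mul
        (measurable_const.sub (Real.measurable_log.comp measurable_fst)))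
    have hbus : busemann {p : EuclideanSpace ℝ (Fin 2) | 0 < p 0 ∧ p 0 * Real.log (p 0) < p 1}
        {p : EuclideanSpace ℝ (Fin 2) | 0 < p 0 ∧ p 0 < ε ∧ a * p 0 < p 1 ∧ p 1 < b * p 0}
        = ⊤ := by
      rw [busemann_eq, eq_top_iff]
      have hptwise : ∀ p ∈ eqv ⁻¹' S₁, H (eqv p) ≤
          (volume (finslerBall {p : EuclideanSpace ℝ (Fin 2) |
            0 < p 0 ∧ p 0 * Real.log (p 0) < p 1} p))⁻¹ := by
        intro p hp
        have hp' : 0 < p 0 ∧ p 0 < ε₁ ∧ a * p 0 < p 1 ∧ p 1 < b * p 0 := hp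
        obtain ⟨hp0, hpε, hpa, hpb⟩ := hp'
        have hp1 : p 0 < 1 := lt_of_lt_of_le hpε hε₁1
        have hlog : Real.log (p 0) < 0 := Real.log_neg hp0 hp1
        have hpΩ : p ∈ {p : EuclideanSpace ℝ (Fin 2) | 0 < p 0 ∧ p 0 * Real.log (p 0) < p 1} := by
          refine ⟨hp0, ?_⟩
          have h1 : p 0 * Real.log (p 0) < 0 := mul_neg_of_pos_of_neg hp0 hlog
          have h2 : 0 < a * p 0 := mul_pos ha hp0
          linarith
        have hbound := vol_ball_le hpΩ
        have hd : 0 < p 1 - p 0 * Real.log (p 0) := by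
          have := hpΩ.2; linarith
        have hR : 0 < 4 * p 0 * (p 1 - p 0 * Real.log (p 0)) := by positivity
        have step1 : H (eqv p) ≤ ENNReal.ofReal (1 / (4 * p 0 * (p 1 - p 0 * Real.log (p 0)))) := by
          show ENNReal.ofReal (1 / (4 * (p 0)^2 * (b - Real.log (p 0)))) ≤ _
          apply ENNReal.ofReal_le_ofReal
          apply one_div_le_one_div_of_le hR
          have : p 1 - p 0 * Real.log (p 0) ≤ p 0 * (b - Real.log (p 0)) := by nlinarith
          nlinarith
        refine le_trans step1 ?_
        rw [one_div, ENNReal.ofReal_inv_of_pos hR]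
        exact ENNReal.inv_le_inv' hbound
      calc (⊤:ENNReal) = ∫⁻ q in S₁, H q := (fubini_top ha hab hε₁0 hε₁1).symm
        _ = ∫⁻ p in eqv ⁻¹' S₁, H (eqv p) := (lintegral_transfer S₁ hS₁meas H hHmeas).symm
        _ ≤ ∫⁻ p in eqv ⁻¹' S₁,
            (volume (finslerBall {p : EuclideanSpace ℝ (Fin 2) |
              0 < p 0 ∧ p 0 * Real.log (p 0) < p 1} p))⁻¹ :=
            setLIntegral_mono' (eqv.measurableSet_preimage.2 hS₁meas) hptwise
        _ ≤ _ := by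
            apply lintegral_mono_set
            intro p hp
            have hp' : 0 < p 0 ∧ p 0 < ε₁ ∧ a * p 0 < p 1 ∧ p 1 < b * p 0 := hp
            exact ⟨hp'.1, lt_of_lt_of_le hp'.2.1 (min_le_left _ _), hp'.2.2.1, hp'.2.2.2⟩
    exact ⟨hI, by rw [hI, hbus], hbus⟩
end

section
/- Let Ω be a properly convex open subset of ℙ²(ℝ) and p ∈ ∂Ω a point where the boundary is not C¹ (the set of supporting lines at p is not a single line). Then every pic of Ω with vertex at infinity p — i.e. every open triangle contained in Ω with exactly one vertex equal to p and that vertex on ∂Ω — has infinite Busemann volume μ_Ω. -/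
open MeasureTheory

lemma finslerBall_subset_s18 {Ω : Set (EuclideanSpace ℝ (Fin 2))} (hopen : IsOpen Ω)
    (hconv : Convex ℝ Ω) (hbdd : Bornology.IsBounded Ω) {x : EuclideanSpace ℝ (Fin 2)}
    (hx : x ∈ Ω) {v : EuclideanSpace ℝ (Fin 2)} (hv : v ∈ finslerBall Ω x) :
    x + v ∈ Ω ∧ x - v ∈ Ω := by
  by_cases hv0 : v = 0
  · constructor <;> simp [hv0, hx]
  have hvpos : (0:ℝ) < ‖v‖ := norm_pos_iff.2 hv0
  set S := {t : ℝ | x + t • v ∈ Ω} with hSdef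
  have hS0 : (0:ℝ) ∈ S := by simp [hSdef, hx]
  obtain ⟨R, hR⟩ := isBounded_iff_forall_norm_le.1 hbdd
  have hsub : ∀ t ∈ S, |t| ≤ (R + ‖x‖) / ‖v‖ := by
    intro t ht
    rw [le_div_iff₀ hvpos]
    have h1 : ‖x + t • v‖ ≤ R := hR _ ht
    have h2 : ‖(x + t • v) - x‖ ≤ ‖x + t • v‖ + ‖x‖ := norm_sub_le _ _
    rw [add_sub_cancel_left, norm_smul, Real.norm_eq_abs] at h2
    linarith
  have hbA : BddAbove S := ⟨(R + ‖x‖) / ‖v‖, fun t ht => (abs_le.1 (hsub t ht)).2⟩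
  have hbB : BddBelow S := ⟨-((R + ‖x‖) / ‖v‖), fun t ht => (abs_le.1 (hsub t ht)).1⟩
  have hSopen : IsOpen S := by
    have hcont : Continuous fun t : ℝ => x + t • v := by continuity
    exact hopen.preimage hcont
  obtain ⟨ε, hε, hball⟩ := Metric.isOpen_iff.1 hSopen 0 hS0
  have hεS : ε / 2 ∈ S := hball (by
    simp only [Metric.mem_ball, Real.dist_eq, sub_zero]
    rw [abs_of_pos (by linarith)]; linarith)
  have hmεS : -(ε / 2) ∈ S := hball (by
    simp only [Metric.mem_ball, Real.dist_eq, sub_zero]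
    rw [abs_of_neg (by linarith)]; linarith)
  have hThalf : ε / 2 ≤ tPlus Ω x v := le_csSup hbA hεS
  have hMhalf : tMinus Ω x v ≤ -(ε / 2) := csInf_le hbB hmεS
  have hT : 0 < tPlus Ω x v := lt_of_lt_of_le (by linarith) hThalf
  have hM : tMinus Ω x v < 0 := lt_of_le_of_lt hMhalf (by linarith)
  have hnorm : (1 / ‖x - (x + tMinus Ω x v • v)‖ + 1 / ‖x - (x + tPlus Ω x v • v)‖) * ‖v‖ < 1 := hv
  have e1 : ‖x - (x + tMinus Ω x v • v)‖ = -(tMinus Ω x v) * ‖v‖ := by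
    rw [sub_add_cancel_left, norm_neg, norm_smul, Real.norm_eq_abs, abs_of_neg hM]
  have e2 : ‖x - (x + tPlus Ω x v • v)‖ = tPlus Ω x v * ‖v‖ := by
    rw [sub_add_cancel_left, norm_neg, norm_smul, Real.norm_eq_abs, abs_of_pos hT]
  rw [e1, e2] at hnorm
  have hsimp : (1 / (-(tMinus Ω x v) * ‖v‖) + 1 / (tPlus Ω x v * ‖v‖)) * ‖v‖
      = 1 / (-(tMinus Ω x v)) + 1 / tPlus Ω x v := by
    have hvne : ‖v‖ ≠ 0 := ne_of_gt hvpos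
    rw [one_div, one_div, mul_inv, mul_inv, add_mul, mul_assoc, mul_assoc,
      inv_mul_cancel₀ hvne, mul_one, mul_one, one_div, one_div]
  rw [hsimp] at hnorm
  have hMpos : 0 < -(tMinus Ω x v) := by linarith
  have hTgt1 : 1 < tPlus Ω x v := by
    have h2 : 0 < 1 / (-(tMinus Ω x v)) := by positivity
    have h1 : 1 / tPlus Ω x v < 1 := by linarith
    rwa [div_lt_one hT] at h1
  have hMlt : tMinus Ω x v < -1 := by
    have h2 : 0 < 1 / tPlus Ω x v := by positivity
    have h1 : 1 / (-(tMinus Ω x v)) < 1 := by linarith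
    rw [div_lt_one hMpos] at h1
    linarith
  obtain ⟨t, htS, ht1⟩ := (lt_csSup_iff hbA ⟨0, hS0⟩).1 hTgt1
  obtain ⟨u, huS, hu1⟩ := (csInf_lt_iff hbB ⟨0, hS0⟩).1 hMlt
  have ht0 : t ≠ 0 := by linarith
  have hu0 : u ≠ 0 := by linarith
  constructor
  · have hmem := hconv hx htS (a := 1 - t⁻¹) (b := t⁻¹)
      (by rw [sub_nonneg]; exact inv_le_one_of_one_le₀ ht1.le)
      (by positivity) (by ring)
    have heq : (1 - t⁻¹) • x + t⁻¹ • (x + t • v) = x + v := by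
      rw [smul_add, smul_smul, inv_mul_cancel₀ ht0, one_smul, sub_smul, one_smul]
      abel
    rwa [heq] at hmem
  · have hcu : (0:ℝ) < (-u)⁻¹ := by
      have : (0:ℝ) < -u := by linarith
      positivity
    have hcu1 : (-u)⁻¹ ≤ 1 := by
      rw [← one_div]
      rw [div_le_one (by linarith)]
      linarith
    have hmem := hconv hx huS (a := 1 - (-u)⁻¹) (b := (-u)⁻¹)
      (by linarith) hcu.le (by ring)
    have heq : (1 - (-u)⁻¹) • x + (-u)⁻¹ • (x + u • v) = x - v := by
      rw [smul_add, smul_smul, sub_smul, one_smul]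
      have : (-u)⁻¹ * u = -1 := by
        rw [inv_neg, neg_mul, inv_mul_cancel₀ hu0]
      rw [this, neg_one_smul]
      abel
    rwa [heq] at hmem

lemma volume_quad_bound {f g : EuclideanSpace ℝ (Fin 2) →L[ℝ] ℝ} (hf0 : f ≠ 0)
    (hfg : ¬ ∃ c : ℝ, g = c • f) :
    ∃ D : ℝ, 0 < D ∧ ∀ s t : ℝ, 0 < s → 0 < t →
      volume {v : EuclideanSpace ℝ (Fin 2) | |f v| < s ∧ |g v| < t}
        ≤ ENNReal.ofReal (D * s * t) := by
  classical
  set e0 : EuclideanSpace ℝ (Fin 2) := EuclideanSpace.single 0 1 with he0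
  set e1 : EuclideanSpace ℝ (Fin 2) := EuclideanSpace.single 1 1 with he1
  set L : EuclideanSpace ℝ (Fin 2) →ₗ[ℝ] EuclideanSpace ℝ (Fin 2) :=
    (f : EuclideanSpace ℝ (Fin 2) →ₗ[ℝ] ℝ).smulRight e0
      + (g : EuclideanSpace ℝ (Fin 2) →ₗ[ℝ] ℝ).smulRight e1 with hL
  have hL0 : ∀ v, L v 0 = f v := by
    intro v
    simp [hL, he0, he1, EuclideanSpace.single_apply]
  have hL1 : ∀ v, L v 1 = g v := by
    intro v
    simp [hL, he0, he1, EuclideanSpace.single_apply]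
  have hker : ∀ u : EuclideanSpace ℝ (Fin 2), f u = 0 → g u = 0 → u = 0 := by
    intro u hfu hgu
    by_contra hu
    obtain ⟨w, hw⟩ : ∃ w, f w ≠ 0 := by
      by_contra h
      push_neg at h
      exact hf0 (ContinuousLinearMap.ext (by simpa using h))
    have hli : LinearIndependent ℝ ![w, u] := by
      rw [linearIndependent_fin2]
      constructor
      · simpa using hu
      · intro a hau
        simp only [Matrix.cons_val_one, Matrix.head_cons, Matrix.cons_val_zero] at hau
        apply hw
        rw [← hau, _root_.map_smul, hfu, smul_zero]
    have hcard : Fintype.card (Fin 2) = Module.finrank ℝ (EuclideanSpace ℝ (Fin 2)) := by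
      simp
    let bb := basisOfLinearIndependentOfCardEqFinrank hli hcard
    have hbb : ⇑bb = ![w, u] := coe_basisOfLinearIndependentOfCardEqFinrank hli hcard
    apply hfg
    refine ⟨g w / f w, ContinuousLinearMap.coe_injective ?_⟩
    refine Module.Basis.ext bb fun i => ?_
    have h0 : bb 0 = w := by rw [hbb]; rfl
    have h1 : bb 1 = u := by rw [hbb]; rfl
    fin_cases i
    · simp only [Fin.zero_eta, h0, ContinuousLinearMap.coe_coe, ContinuousLinearMap.smul_apply,
        smul_eq_mul]
      rw [div_mul_cancel₀ _ hw]
    · simp only [Fin.mk_one, h1, ContinuousLinearMap.coe_coe, ContinuousLinearMap.smul_apply,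
        smul_eq_mul]
      rw [hgu, hfu, mul_zero]
  have hinj : Function.Injective L := by
    rw [← LinearMap.ker_eq_bot]
    rw [LinearMap.ker_eq_bot']
    intro u hu
    exact hker u (by rw [← hL0 u, hu]; rfl) (by rw [← hL1 u, hu]; rfl)
  have hdet : LinearMap.det L ≠ 0 := by
    have hbij : Function.Bijective L := ⟨hinj, LinearMap.injective_iff_surjective.mp hinj⟩
    have h := LinearEquiv.isUnit_det' (LinearEquiv.ofBijective L hbij)
    have hco : ((LinearEquiv.ofBijective L hbij :
        EuclideanSpace ℝ (Fin 2) ≃ₗ[ℝ] EuclideanSpace ℝ (Fin 2)) :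
        EuclideanSpace ℝ (Fin 2) →ₗ[ℝ] EuclideanSpace ℝ (Fin 2)) = L := rfl
    rw [hco] at h
    exact h.ne_zero
  have habs : 0 < |(LinearMap.det L)⁻¹| := abs_pos.2 (inv_ne_zero hdet)
  refine ⟨4 * |(LinearMap.det L)⁻¹|, by positivity, fun s t hs ht => ?_⟩
  have hpre : {v : EuclideanSpace ℝ (Fin 2) | |f v| < s ∧ |g v| < t}
      = L ⁻¹' {w : EuclideanSpace ℝ (Fin 2) | |w 0| < s ∧ |w 1| < t} := by
    ext v
    simp [Set.mem_preimage, hL0, hL1]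
  rw [hpre, MeasureTheory.Measure.addHaar_preimage_linearMap volume hdet]
  have hQ : volume {w : EuclideanSpace ℝ (Fin 2) | |w 0| < s ∧ |w 1| < t}
      = ENNReal.ofReal (2 * s) * ENNReal.ofReal (2 * t) := by
    have hmp := EuclideanSpace.volume_preserving_symm_measurableEquiv_toLp (Fin 2)
    have hms : MeasurableSet {w : Fin 2 → ℝ | |w 0| < s ∧ |w 1| < t} := by
      refine MeasurableSet.inter ?_ ?_
      · exact measurableSet_lt ((measurable_pi_apply 0).abs) measurable_const
      · exact measurableSet_lt ((measurable_pi_apply 1).abs) measurable_const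
    have hset : {w : EuclideanSpace ℝ (Fin 2) | |w 0| < s ∧ |w 1| < t}
        = (MeasurableEquiv.toLp 2 (Fin 2 → ℝ)).symm ⁻¹'
          {w : Fin 2 → ℝ | |w 0| < s ∧ |w 1| < t} := rfl
    rw [hset, hmp.measure_preimage hms.nullMeasurableSet]
    have hpi : {w : Fin 2 → ℝ | |w 0| < s ∧ |w 1| < t}
        = Set.pi Set.univ ![Set.Ioo (-s) s, Set.Ioo (-t) t] := by
      ext w
      rw [Set.mem_univ_pi, Fin.forall_fin_two]
      simp [abs_lt, and_assoc]
    rw [hpi, volume_pi_pi]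
    rw [Fin.prod_univ_two]
    simp only [Matrix.cons_val_zero, Matrix.cons_val_one, Matrix.head_cons, Real.volume_Ioo]
    congr 1 <;> ring_nf
  rw [hQ, ← ENNReal.ofReal_mul (by positivity), ← ENNReal.ofReal_mul (abs_nonneg _)]
  exact ENNReal.ofReal_le_ofReal (le_of_eq (by ring))

private lemma ennreal_calc (c X Y : ENNReal) (hc0 : c ≠ 0) (hcT : c ≠ ⊤) :
    c * (Y / X) = c / X * (c⁻¹ * (Y * c)) := by
  rw [div_eq_mul_inv, div_eq_mul_inv]
  calc c * (Y * X⁻¹) = (c⁻¹ * c) * (c * (Y * X⁻¹)) := by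
        rw [ENNReal.inv_mul_cancel hc0 hcT, one_mul]
    _ = c * X⁻¹ * (c⁻¹ * (Y * c)) := by ring


set_option maxHeartbeats 2000000 in
/-- Let `Ω` be a properly convex open subset of `ℙ²(ℝ)` (in an affine chart: a nonempty
bounded convex open subset of the plane) and `p ∈ ∂Ω` a point where the boundary is not
`C¹` — there exist two supporting lines at `p` which do not coincide (given by functionals
`f, g` with `f x < f p` and `g x < g p` on `Ω`, and `g` not a multiple of `f`).  Then every
pic of `Ω` with vertex at infinity `p` — every open triangle contained in `Ω` with exactly
one vertex equal to `p`, the other two vertices `a, b` lying in `Ω` — has infinite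
Busemann volume. -/
theorem pic_infinite_volume_of_not_C1
    (Ω : Set (EuclideanSpace ℝ (Fin 2)))
    (hopen : IsOpen Ω) (hconv : Convex ℝ Ω) (hbdd : Bornology.IsBounded Ω)
    (hne : Ω.Nonempty)
    (p : EuclideanSpace ℝ (Fin 2)) (hp : p ∈ frontier Ω)
    (f g : EuclideanSpace ℝ (Fin 2) →L[ℝ] ℝ) (hf0 : f ≠ 0) (hg0 : g ≠ 0)
    (hfsupp : ∀ x ∈ Ω, f x < f p) (hgsupp : ∀ x ∈ Ω, g x < g p)
    (hfg : ¬ ∃ c : ℝ, g = c • f)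
    (a b : EuclideanSpace ℝ (Fin 2)) (ha : a ∈ Ω) (hb : b ∈ Ω)
    (hnc : ¬ Collinear ℝ ({p, a, b} : Set (EuclideanSpace ℝ (Fin 2)))) :
    busemann Ω (interior (convexHull ℝ ({p, a, b} : Set (EuclideanSpace ℝ (Fin 2))))) = ⊤ := by
  classical
  obtain ⟨D, hD, hvolD⟩ := volume_quad_bound hf0 hfg
  set c : ENNReal := volume {v : EuclideanSpace ℝ (Fin 2) | ‖v‖ < 1} with hcdef
  have hcball : {v : EuclideanSpace ℝ (Fin 2) | ‖v‖ < 1} = Metric.ball 0 1 := by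
    ext v; simp [Metric.mem_ball]
  have hc0 : c ≠ 0 := by
    rw [hcdef, hcball]
    exact (Metric.measure_ball_pos volume _ one_pos).ne'
  have hcT : c ≠ ⊤ := by
    rw [hcdef, hcball]
    exact measure_ball_lt_top.ne
  set K := convexHull ℝ ({p, a, b} : Set (EuclideanSpace ℝ (Fin 2))) with hK
  -- the interior of the triangle is nonempty
  have hai : AffineIndependent ℝ ![p, a, b] := affineIndependent_iff_not_collinear_set.2 hnc
  have hrange : Set.range ![p, a, b] = ({p, a, b} : Set (EuclideanSpace ℝ (Fin 2))) := by
    ext z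
    constructor
    · rintro ⟨i, rfl⟩
      fin_cases i <;> simp
    · rintro (rfl | rfl | rfl)
      exacts [⟨0, rfl⟩, ⟨1, rfl⟩, ⟨2, rfl⟩]
  have hspan : affineSpan ℝ ({p, a, b} : Set (EuclideanSpace ℝ (Fin 2))) = ⊤ := by
    rw [← hrange]
    exact hai.affineSpan_eq_top_iff_card_eq_finrank_add_one.2 (by simp)
  obtain ⟨q, hq⟩ : (interior K).Nonempty :=
    interior_convexHull_nonempty_iff_affineSpan_eq_top.2 hspan
  have hKconv : Convex ℝ K := convex_convexHull ℝ _
  have hpK : p ∈ K := subset_convexHull ℝ _ (by simp)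
  -- the interior of the triangle is contained in Ω
  have hKsub : K ⊆ closure Ω := by
    refine convexHull_min ?_ hconv.closure
    intro z hz
    rcases hz with rfl | rfl | rfl
    · exact frontier_subset_closure hp
    · exact subset_closure ha
    · exact subset_closure hb
  have hT'Ω : interior K ⊆ Ω := by
    intro y hy
    have hyc : y ∈ interior (closure Ω) := interior_mono hKsub hy
    obtain ⟨ε, hε, hball⟩ := Metric.isOpen_iff.1 isOpen_interior y hyc
    by_cases hya : y = a
    · rwa [hya]
    have hna : (0:ℝ) < ‖y - a‖ := by
      rw [norm_pos_iff, sub_ne_zero]; exact hya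
    set δ : ℝ := ε / (2 * ‖y - a‖) with hδdef
    have hδ : 0 < δ := by positivity
    set z := y + δ • (y - a) with hzdef
    have hz : z ∈ closure Ω := by
      refine interior_subset (hball ?_)
      rw [Metric.mem_ball, dist_eq_norm, hzdef]
      have : y + δ • (y - a) - y = δ • (y - a) := by abel
      rw [this, norm_smul, Real.norm_eq_abs, abs_of_pos hδ, hδdef, div_mul_eq_mul_div,
        div_lt_iff₀ (by positivity)]
      nlinarith
    have hmem := hconv.combo_interior_closure_mem_interior
      (x := a) (y := z) (by rwa [hopen.interior_eq]) hz
      (a := δ / (1 + δ)) (b := 1 / (1 + δ)) (by positivity) (by positivity)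
      (by field_simp; ring)
    have heq : (δ / (1 + δ)) • a + (1 / (1 + δ)) • z = y := by
      rw [hzdef]
      have h1δ : (1:ℝ) + δ ≠ 0 := by positivity
      match_scalars <;> field_simp <;> ring
    rw [heq, hopen.interior_eq] at hmem
    exact hmem
  have hqΩ : q ∈ Ω := hT'Ω hq
  -- the support functions
  set sf : EuclideanSpace ℝ (Fin 2) → ℝ := fun x => f p - f x with hsfdef
  set tg : EuclideanSpace ℝ (Fin 2) → ℝ := fun x => g p - g x with htgdef
  have hsfpos : ∀ x ∈ Ω, 0 < sf x := fun x hx => sub_pos.2 (hfsupp x hx)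
  have htgpos : ∀ x ∈ Ω, 0 < tg x := fun x hx => sub_pos.2 (hgsupp x hx)
  have hsq : 0 < sf q := hsfpos q hqΩ
  have htq : 0 < tg q := htgpos q hqΩ
  -- choice of the radius
  obtain ⟨r₀, hr₀, hball₀⟩ := Metric.isOpen_iff.1 isOpen_interior q hq
  set r : ℝ := min r₀ (min (sf q / (4 * (‖f‖ + 1))) (tg q / (4 * (‖g‖ + 1)))) with hrdef
  have hrpos : 0 < r := by
    refine lt_min hr₀ (lt_min (by positivity) (by positivity))
  have hrf : ‖f‖ * r ≤ sf q / 4 := by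
    have h1 : r ≤ sf q / (4 * (‖f‖ + 1)) := le_trans (min_le_right _ _) (min_le_left _ _)
    have h2 : ‖f‖ * r ≤ ‖f‖ * (sf q / (4 * (‖f‖ + 1))) :=
      mul_le_mul_of_nonneg_left h1 (norm_nonneg _)
    refine h2.trans ?_
    have h3 : ‖f‖ * (sf q / (4 * (‖f‖ + 1))) = (‖f‖ * sf q) / (4 * (‖f‖ + 1)) := by ring
    rw [h3, div_le_div_iff₀ (by positivity) (by norm_num)]
    nlinarith [norm_nonneg f, hsq]
  have hrg : ‖g‖ * r ≤ tg q / 4 := by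
    have h1 : r ≤ tg q / (4 * (‖g‖ + 1)) := le_trans (min_le_right _ _) (min_le_right _ _)
    have h2 : ‖g‖ * r ≤ ‖g‖ * (tg q / (4 * (‖g‖ + 1))) :=
      mul_le_mul_of_nonneg_left h1 (norm_nonneg _)
    refine h2.trans ?_
    have h3 : ‖g‖ * (tg q / (4 * (‖g‖ + 1))) = (‖g‖ * tg q) / (4 * (‖g‖ + 1)) := by ring
    rw [h3, div_le_div_iff₀ (by positivity) (by norm_num)]
    nlinarith [norm_nonneg g, htq]
  have hballT : Metric.ball q r ⊆ interior K :=
    le_trans (Metric.ball_subset_ball (min_le_left _ _)) hball₀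
  -- the dyadic balls
  set w : ℕ → ℝ := fun n => (1/2 : ℝ) ^ n with hwdef
  have hw0 : ∀ n, 0 < w n := fun n => by positivity
  have hw1 : ∀ n, w n ≤ 1 := fun n => pow_le_one₀ (by norm_num) (by norm_num)
  have hwhalf : ∀ m n, m < n → 2 * w n ≤ w m := by
    intro m n hmn
    have : w n = w m * (1/2:ℝ) ^ (n - m) := by
      rw [hwdef, ← pow_add]
      congr 1
      omega
    rw [this]
    have h1 : ((1:ℝ)/2) ^ (n - m) ≤ (1/2 : ℝ) ^ 1 := by
      refine pow_le_pow_of_le_one (by norm_num) (by norm_num) (by omega)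
    have h2 : 0 < w m := hw0 m
    rw [pow_one] at h1
    nlinarith
  set A : ℕ → Set (EuclideanSpace ℝ (Fin 2)) :=
    fun n => Metric.ball (p + w n • (q - p)) (w n * r) with hAdef
  -- each dyadic ball is inside the triangle
  have hAT : ∀ n, A n ⊆ interior K := by
    intro n x hx
    set y : EuclideanSpace ℝ (Fin 2) := p + (w n)⁻¹ • (x - p) with hydef
    have hwne : w n ≠ 0 := (hw0 n).ne'
    have hyq : y ∈ Metric.ball q r := by
      rw [Metric.mem_ball, dist_eq_norm, hydef]
      have hrew : p + (w n)⁻¹ • (x - p) - q = (w n)⁻¹ • (x - (p + w n • (q - p))) := by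
        match_scalars <;> field_simp <;> ring
      rw [hrew, norm_smul, Real.norm_eq_abs, abs_of_pos (by positivity)]
      rw [Metric.mem_ball, dist_eq_norm] at hx
      calc (w n)⁻¹ * ‖x - (p + w n • (q - p))‖ < (w n)⁻¹ * (w n * r) := by
            exact mul_lt_mul_of_pos_left hx (by positivity)
        _ = r := by field_simp
    have hyT : y ∈ interior K := hballT hyq
    have hcombo := hKconv.combo_interior_closure_mem_interior
      (x := y) (y := p) hyT (subset_closure hpK)
      (a := w n) (b := 1 - w n) (hw0 n) (by linarith [hw1 n]) (by ring)
    have heq : w n • y + (1 - w n) • p = x := by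
      rw [hydef]
      match_scalars <;> field_simp <;> try ring
    rwa [heq] at hcombo
  -- value of the support functions on the dyadic balls
  have hsfA : ∀ n, ∀ x ∈ A n, w n * ((3/4) * sf q) ≤ sf x ∧ sf x ≤ w n * ((5/4) * sf q) := by
    intro n x hx
    have hc : sf (p + w n • (q - p)) = w n * sf q := by
      simp only [hsfdef, map_add, _root_.map_smul, map_sub, smul_eq_mul]
      ring
    have hd : |sf x - sf (p + w n • (q - p))| ≤ w n * (sf q / 4) := by
      have h1 : sf x - sf (p + w n • (q - p)) = f ((p + w n • (q - p)) - x) := by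
        simp only [hsfdef, map_sub]
        ring
      rw [h1]
      refine le_trans (f.le_opNorm _) ?_
      have h2 : ‖(p + w n • (q - p)) - x‖ ≤ w n * r := by
        rw [Metric.mem_ball, dist_eq_norm] at hx
        rw [← norm_neg]
        have : -((p + w n • (q - p)) - x) = x - (p + w n • (q - p)) := by abel
        rw [this]
        exact hx.le
      calc ‖f‖ * ‖(p + w n • (q - p)) - x‖ ≤ ‖f‖ * (w n * r) :=
            mul_le_mul_of_nonneg_left h2 (norm_nonneg _)
        _ = w n * (‖f‖ * r) := by ring
        _ ≤ w n * (sf q / 4) := mul_le_mul_of_nonneg_left hrf (hw0 n).le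
    rw [abs_le, hc] at hd
    refine ⟨by linarith [hd.1], by linarith [hd.2]⟩
  have htgA : ∀ n, ∀ x ∈ A n, tg x ≤ w n * ((5/4) * tg q) := by
    intro n x hx
    have hc : tg (p + w n • (q - p)) = w n * tg q := by
      simp only [htgdef, map_add, _root_.map_smul, map_sub, smul_eq_mul]
      ring
    have hd : |tg x - tg (p + w n • (q - p))| ≤ w n * (tg q / 4) := by
      have h1 : tg x - tg (p + w n • (q - p)) = g ((p + w n • (q - p)) - x) := by
        simp only [htgdef, map_sub]
        ring
      rw [h1]
      refine le_trans (g.le_opNorm _) ?_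
      have h2 : ‖(p + w n • (q - p)) - x‖ ≤ w n * r := by
        rw [Metric.mem_ball, dist_eq_norm] at hx
        rw [← norm_neg]
        have : -((p + w n • (q - p)) - x) = x - (p + w n • (q - p)) := by abel
        rw [this]
        exact hx.le
      calc ‖g‖ * ‖(p + w n • (q - p)) - x‖ ≤ ‖g‖ * (w n * r) :=
            mul_le_mul_of_nonneg_left h2 (norm_nonneg _)
        _ = w n * (‖g‖ * r) := by ring
        _ ≤ w n * (tg q / 4) := mul_le_mul_of_nonneg_left hrg (hw0 n).le
    rw [abs_le, hc] at hd
    linarith [hd.2]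
  -- the dyadic balls are pairwise disjoint
  have hdisj : Pairwise (Function.onFun Disjoint A) := by
    have key : ∀ m n, m < n → Disjoint (A m) (A n) := by
      intro m n hmn
      rw [Set.disjoint_left]
      intro x hxm hxn
      have h1 := (hsfA m x hxm).1
      have h2 := (hsfA n x hxn).2
      have h3 := mul_le_mul_of_nonneg_right (hwhalf m n hmn) hsq.le
      have h4 := mul_pos (hw0 n) hsq
      clear_value w sf A
      linarith [h1, h2]
    intro m n hmn
    rcases lt_or_gt_of_ne hmn with h | h
    · exact key m n h
    · exact (key n m h).symm
  -- pointwise lower bound for the integrand on the dyadic balls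
  set C : ℝ := D * ((5/4) * sf q) * ((5/4) * tg q) with hCdef
  have hCpos : 0 < C := by positivity
  have hpoint : ∀ n, ∀ x ∈ A n,
      c / ENNReal.ofReal (C * (w n)^2) ≤ (nVol (finslerBall Ω x))⁻¹ := by
    intro n x hx
    have hxT : x ∈ interior K := hAT n hx
    have hxΩ : x ∈ Ω := hT'Ω hxT
    have hsx : 0 < sf x := hsfpos x hxΩ
    have htx : 0 < tg x := htgpos x hxΩ
    have hsubq : finslerBall Ω x ⊆ {v : EuclideanSpace ℝ (Fin 2) | |f v| < sf x ∧ |g v| < tg x} := by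
      intro v hv
      obtain ⟨hplus, hminus⟩ := finslerBall_subset_s18 hopen hconv hbdd hxΩ hv
      have h1 := hfsupp _ hplus
      have h2 := hfsupp _ hminus
      have h3 := hgsupp _ hplus
      have h4 := hgsupp _ hminus
      simp only [map_add, map_sub] at h1 h2 h3 h4
      constructor
      · rw [abs_lt]; constructor <;> [simp only [hsfdef]; simp only [hsfdef]] <;> linarith
      · rw [abs_lt]; constructor <;> [simp only [htgdef]; simp only [htgdef]] <;> linarith
    have hvol1 : volume (finslerBall Ω x) ≤ ENNReal.ofReal (D * sf x * tg x) :=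
      le_trans (measure_mono hsubq) (hvolD _ _ hsx htx)
    have hvol2 : volume (finslerBall Ω x) ≤ ENNReal.ofReal (C * (w n)^2) := by
      refine hvol1.trans (ENNReal.ofReal_le_ofReal ?_)
      have h1 := (hsfA n x hx).2
      have h2 := htgA n x hx
      have hmul := mul_le_mul h1 h2 htx.le (by positivity)
      have hmul2 := mul_le_mul_of_nonneg_left hmul hD.le
      calc D * sf x * tg x = D * (sf x * tg x) := by ring
        _ ≤ D * ((w n * (5/4 * sf q)) * (w n * (5/4 * tg q))) := hmul2
        _ = C * (w n)^2 := by rw [hCdef]; ring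
    have hnv : nVol (finslerBall Ω x) ≤ ENNReal.ofReal (C * (w n)^2) / c := by
      rw [nVol, ← hcdef]
      exact ENNReal.div_le_div_right hvol2 c
    refine le_trans (le_of_eq ?_) (ENNReal.inv_le_inv' hnv)
    rw [ENNReal.inv_div (Or.inr ENNReal.ofReal_ne_top) (Or.inl hc0)]
  -- lower bound for the integral over each dyadic ball
  set μ' : Measure (EuclideanSpace ℝ (Fin 2)) := c⁻¹ • volume with hμ'def
  set ε₀ : ENNReal := c * ENNReal.ofReal (r^2 / C) with hε₀def
  have hε₀ : ε₀ ≠ 0 := by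
    rw [hε₀def]
    exact mul_ne_zero hc0 (ENNReal.ofReal_pos.2 (by positivity)).ne'
  have hpiece : ∀ n, ε₀ ≤ ∫⁻ x in A n, (nVol (finslerBall Ω x))⁻¹ ∂μ' := by
    intro n
    have h1 : ∫⁻ _ in A n, (c / ENNReal.ofReal (C * (w n)^2)) ∂μ'
        ≤ ∫⁻ x in A n, (nVol (finslerBall Ω x))⁻¹ ∂μ' := by
      refine setLIntegral_mono' Metric.isOpen_ball.measurableSet ?_
      intro x hx
      exact hpoint n x hx
    refine le_trans (le_of_eq ?_) h1
    rw [setLIntegral_const]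
    have hμA : μ' (A n) = c⁻¹ * (ENNReal.ofReal ((w n * r)^2) * c) := by
      rw [hμ'def, Measure.smul_apply, smul_eq_mul, hAdef]
      congr 1
      have := Measure.addHaar_ball (volume : Measure (EuclideanSpace ℝ (Fin 2)))
        (p + w n • (q - p)) (r := w n * r) (by positivity)
      rw [this, finrank_euclideanSpace_fin, hcdef, hcball]
    rw [hμA]
    have hCw : 0 < C * (w n)^2 := by positivity
    have hofr : ENNReal.ofReal ((w n * r)^2) / ENNReal.ofReal (C * (w n)^2)
        = ENNReal.ofReal (r^2 / C) := by
      rw [← ENNReal.ofReal_div_of_pos hCw]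
      congr 1
      rw [show (w n * r)^2 = (w n)^2 * r^2 by ring, show C * (w n)^2 = (w n)^2 * C by ring,
        mul_div_mul_left _ _ (pow_ne_zero 2 (hw0 n).ne')]
    rw [hε₀def, ← hofr]
    exact ennreal_calc c (ENNReal.ofReal (C * (w n)^2)) (ENNReal.ofReal ((w n * r)^2)) hc0 hcT
  -- conclusion
  rw [eq_top_iff]
  simp only [busemann]
  rw [← hcdef, ← hμ'def]
  calc (⊤ : ENNReal) = ∑' _ : ℕ, ε₀ := (ENNReal.tsum_const_eq_top_of_ne_zero hε₀).symm
    _ ≤ ∑' n, ∫⁻ x in A n, (nVol (finslerBall Ω x))⁻¹ ∂μ' := ENNReal.tsum_le_tsum hpiece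
    _ = ∫⁻ x in ⋃ n, A n, (nVol (finslerBall Ω x))⁻¹ ∂μ' :=
        (lintegral_iUnion (fun n => Metric.isOpen_ball.measurableSet) hdisj _).symm
    _ ≤ ∫⁻ x in interior K, (nVol (finslerBall Ω x))⁻¹ ∂μ' :=
        lintegral_mono_set (Set.iUnion_subset hAT)
end
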